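/- Let I be a finite linearly ordered set, ℋ a complex Hilbert space of dimension 2^{|I|}, (a_i)_{i∈I} a family in ℒ(ℋ) satisfying the canonical anticommutation relations, and Ω ∈ ℋ a unit vector with a_i Ω = 0 for all i ∈ I. For f : I → {0,1,2,3} define the normalized monomial M_f := n_f · Π_{i∈I} m_{i,f(i)} (product in increasing order of i), where m_{i,0} := 1, m_{i,1} := a_i, m_{i,2} := a*_i, m_{i,3} := a*_i a_i − a_i a*_i, and n_f := 2^{−|{i ∈ I : f(i) ∈ {0,3}}|/2}. Then the 4^{|I|} monomials {M_f : f ∈ {0,1,2,3}^I} form an orthonormal basis of ℒ(ℋ) with respect to the Hilbert–Schmidt inner product ⟨A, B⟩ := tr(A* B). -/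

import Mathlib

open ContinuousLinearMap

noncomputable section

variable {ℋ : Type*} [NormedAddCommGroup ℋ] [InnerProductSpace ℂ ℋ] [FiniteDimensional ℂ ℋ]

/-- The basic factors `m_{i,0} = 1`, `m_{i,1} = a_i`, `m_{i,2} = a*_i`,
`m_{i,3} = a*_i a_i − a_i a*_i`. -/
def mFactor (a : ℋ →L[ℂ] ℋ) : Fin 4 → (ℋ →L[ℂ] ℋ) :=
  ![1, a, adjoint a, adjoint a * a - a * adjoint a]

/-- The normalized monomial `M_f = n_f · Π_{i∈I} m_{i,f(i)}` (product in increasing index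
order), with `n_f = 2^{-|{i : f(i) ∈ {0,3}}|/2}`. -/
def monomial {I : Type*} [Fintype I] [LinearOrder I] [DecidableEq I]
    (a : I → ℋ →L[ℂ] ℋ) (f : I → Fin 4) : ℋ →L[ℂ] ℋ :=
  ((2 : ℝ) ^ (-((Finset.univ.filter fun i => f i = 0 ∨ f i = 3).card : ℝ) / 2)) •
    ((Finset.univ.sort (· ≤ ·)).map fun i => mFactor (a i) (f i)).prod


namespace Stmt13
structure CARSys (I : Type*) [DecidableEq I] (ℋ : Type*) [NormedAddCommGroup ℋ] [InnerProductSpace ℂ ℋ]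
    [FiniteDimensional ℂ ℋ] where
  a : I → ℋ →L[ℂ] ℋ
  mix : ∀ i j, a i * adjoint (a j) + adjoint (a j) * a i = if i = j then 1 else 0
  ann : ∀ i j, a i * a j + a j * a i = 0
  Ω : ℋ
  hΩn : ‖Ω‖ = 1
  hΩ : ∀ i, a i Ω = 0
namespace CARSys
variable {I : Type*} [DecidableEq I] (d : CARSys I ℋ)
def c (i : I) : ℋ →L[ℂ] ℋ := adjoint (d.a i)

lemma ann' (i j : I) : d.a i * d.a j = -(d.a j * d.a i) :=
  eq_neg_of_add_eq_zero_left (d.ann i j)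

lemma aa (i : I) : d.a i * d.a i = 0 := by
  have h := d.ann i i
  rw [← two_smul ℂ] at h
  simpa using h

lemma cstar (i : I) : d.c i = star (d.a i) := (ContinuousLinearMap.star_eq_adjoint _).symm

lemma cc' (i j : I) : d.c i * d.c j = -(d.c j * d.c i) := by
  have h := congrArg star (d.ann' j i)
  simpa [cstar, star_mul] using h

lemma cc (i : I) : d.c i * d.c i = 0 := by
  have h := congrArg star (d.aa i)
  simpa [cstar, star_mul] using h

lemma mix' (i j : I) : d.a i * d.c j = (if i = j then 1 else 0) - d.c j * d.a i := by
  have h := d.mix i j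
  have h2 : d.a i * d.c j + d.c j * d.a i = if i = j then 1 else 0 := h
  linear_combination (norm := abel) h2

lemma ac_ne (i j : I) (h : i ≠ j) : d.a i * d.c j = -(d.c j * d.a i) := by
  rw [mix' d i j, if_neg h, zero_sub]

lemma ac_eq (i : I) : d.a i * d.c i = 1 - d.c i * d.a i := by
  rw [mix' d i i, if_pos rfl]
variable (hann' : ∀ i j, d.a i * d.a j = -(d.a j * d.a i))
  (hcc' : ∀ i j : I, d.c i * d.c j = -(d.c j * d.c i))
  (hcc : ∀ i : I, d.c i * d.c i = 0)
  (hacne : ∀ i j : I, i ≠ j → d.a i * d.c j = -(d.c j * d.a i))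
  (haceq : ∀ i : I, d.a i * d.c i = 1 - d.c i * d.a i)

def vacL (l : List I) : ℋ := (l.map d.c).prod d.Ω

lemma vacL_nil : d.vacL [] = d.Ω := by simp [vacL]

lemma vacL_cons (i : I) (l : List I) : d.vacL (i :: l) = d.c i (d.vacL l) := by
  simp [vacL, List.prod_cons, mul_apply_eq_comp]

include hacne in
lemma a_vacL_not_mem : ∀ (l : List I) (i : I), i ∉ l → d.a i (d.vacL l) = 0 := by
  intro l
  induction l with
  | nil => intro i _; simpa [vacL] using d.hΩ i
  | cons j t ih =>
    intro i hi
    have hij : i ≠ j := fun h => hi (h ▸ List.mem_cons_self)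
    have hit : i ∉ t := fun h => hi (List.mem_cons_of_mem j h)
    rw [vacL_cons, ← mul_apply_eq_comp, hacne i j hij]
    simp [mul_apply_eq_comp, ih i hit]

include hacne haceq in
lemma a_vacL : ∀ (l : List I), l.Nodup → ∀ i : I, i ∈ l →
    d.a i (d.vacL l) =
      ((-1 : ℂ) ^ (l.takeWhile (fun j => j ≠ i)).length) • d.vacL (l.erase i) := by
  intro l
  induction l with
  | nil => intro _ i hi; simp at hi
  | cons j t ih =>
    intro hnd i hi
    rcases List.nodup_cons.mp hnd with ⟨hjt, hndt⟩
    by_cases hij : i = j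
    · subst hij
      rw [vacL_cons, ← mul_apply_eq_comp, haceq i]
      rw [List.takeWhile_cons_of_neg (by simp)]
      simp [sub_apply, mul_apply_eq_comp, one_apply_eq_self, a_vacL_not_mem d hacne t i hjt,
        List.erase_cons_head]
    · have hit : i ∈ t := by
        rcases List.mem_cons.mp hi with h | h
        · exact absurd h hij
        · exact h
      rw [vacL_cons, ← mul_apply_eq_comp, hacne i j (fun h => hij h)]
      rw [neg_apply, mul_apply_eq_comp, ih hndt i hit, map_smul, ← vacL_cons,
        List.takeWhile_cons_of_pos (by simpa using Ne.symm hij),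
        List.erase_cons_tail (by simpa using Ne.symm hij), List.length_cons, pow_succ]
      rw [← neg_smul]
      congr 1
      ring

include hcc hcc' in
lemma c_vacL_mem : ∀ (l : List I), l.Nodup → ∀ i : I, i ∈ l → d.c i (d.vacL l) = 0 := by
  intro l
  induction l with
  | nil => intro _ i hi; simp at hi
  | cons j t ih =>
    intro hnd i hi
    rcases List.nodup_cons.mp hnd with ⟨hjt, hndt⟩
    rw [vacL_cons, ← mul_apply_eq_comp]
    by_cases hij : i = j
    · subst hij
      rw [hcc i]
      simp
    · have hit : i ∈ t := by
        rcases List.mem_cons.mp hi with h | h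
        · exact absurd h hij
        · exact h
      rw [hcc' i j]
      simp [mul_apply_eq_comp, ih hndt i hit]


include hcc' in
lemma c_vacL_not_mem [LinearOrder I] : ∀ (l : List I) (i : I), i ∉ l →
    d.c i (d.vacL l) = ((-1 : ℂ) ^ (l.takeWhile (fun j => ¬ i ≤ j)).length) •
      d.vacL (l.orderedInsert (· ≤ ·) i) := by
  intro l
  induction l with
  | nil => intro i _; simp [List.orderedInsert, vacL_cons]
  | cons j t ih =>
    intro i hi
    have hij : i ≠ j := fun h => hi (h ▸ List.mem_cons_self)
    have hit : i ∉ t := fun h => hi (List.mem_cons_of_mem j h)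
    by_cases hle : i ≤ j
    · rw [List.takeWhile_cons_of_neg (by simpa using hle)]
      rw [List.orderedInsert, if_pos hle]
      simp [vacL_cons]
    · rw [vacL_cons, ← mul_apply_eq_comp, hcc' i j, neg_apply, mul_apply_eq_comp, ih i hit, map_smul,
        ← vacL_cons, List.orderedInsert, if_neg hle,
        List.takeWhile_cons_of_pos (by simpa using hle), List.length_cons, pow_succ,
        ← neg_smul]
      congr 1
      ring


section Ordered
variable [LinearOrder I]

lemma takeWhile_ne_eq_filter_lt : ∀ (l : List I), l.Pairwise (· < ·) → ∀ i ∈ l,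
    l.takeWhile (fun j => j ≠ i) = l.filter (fun j => j < i) := by
  intro l
  induction l with
  | nil => intro _ i hi; simp at hi
  | cons j t ih =>
    intro hs i hi
    have hjt : ∀ x ∈ t, j < x := fun x hx => (List.pairwise_cons.mp hs).1 x hx
    have hst : t.Pairwise (· < ·) := (List.pairwise_cons.mp hs).2
    by_cases hij : j = i
    · subst hij
      rw [List.takeWhile_cons_of_neg (by simp)]
      rw [eq_comm, List.filter_eq_nil_iff]
      intro x hx
      rcases List.mem_cons.mp hx with h | h
      · simp [h]
      · simpa using (hjt x h).le.not_gt
    · have hit : i ∈ t := by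
        rcases List.mem_cons.mp hi with h | h
        · exact absurd h.symm hij
        · exact h
      have hji : j < i := hjt i hit
      rw [List.takeWhile_cons_of_pos (by simpa using hij),
        List.filter_cons_of_pos (by simpa using hji), ih hst i hit]

lemma takeWhile_nle_eq_filter_lt : ∀ (l : List I), l.Pairwise (· < ·) → ∀ i : I,
    l.takeWhile (fun j => ¬ i ≤ j) = l.filter (fun j => j < i) := by
  intro l
  induction l with
  | nil => intro _ i; simp
  | cons j t ih =>
    intro hs i
    have hjt : ∀ x ∈ t, j < x := fun x hx => (List.pairwise_cons.mp hs).1 x hx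
    have hst : t.Pairwise (· < ·) := (List.pairwise_cons.mp hs).2
    by_cases h : j < i
    · rw [List.takeWhile_cons_of_pos (by simpa using not_le_of_gt h),
        List.filter_cons_of_pos (by simpa using h), ih hst i]
    · rw [List.takeWhile_cons_of_neg (by simpa using not_lt.mp h)]
      rw [eq_comm, List.filter_eq_nil_iff]
      intro x hx
      rcases List.mem_cons.mp hx with hxx | hxx
      · simpa [hxx] using h
      · have := lt_of_le_of_lt (not_lt.mp h) (hjt x hxx)
        simpa using (this.le.not_gt ∘ fun hh => hh)

def Ov (S : Finset I) : ℋ := d.vacL (S.sort (· ≤ ·))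

def sgn (S : Finset I) (i : I) : ℂ := (-1) ^ ((S.filter (fun j => j < i)).card)

lemma length_filter_sort (S : Finset I) (p : I → Prop) [DecidablePred p] :
    ((S.sort (· ≤ ·)).filter (fun j => p j)).length = (S.filter p).card := by
  rw [← List.toFinset_card_of_nodup (List.Nodup.filter _ (Finset.sort_nodup S _)),
    List.toFinset_filter, Finset.sort_toFinset]
  congr 1
  apply Finset.filter_congr
  intro x _
  simp

lemma sort_erase (S : Finset I) (i : I) :
    (S.sort (· ≤ ·)).erase i = (S.erase i).sort (· ≤ ·) := by
  refine (fun hp h1 h2 => List.Perm.eq_of_pairwise' (r := (· ≤ ·)) h1 h2 hp) ?_ ?_ ?_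
  · rw [← Multiset.coe_eq_coe, ← Multiset.coe_erase, Finset.sort_eq, Finset.sort_eq,
      Finset.erase_val]
  · exact List.Pairwise.sublist (List.erase_sublist) (Finset.pairwise_sort S _)
  · exact Finset.pairwise_sort _ _

lemma sort_oI (S : Finset I) (i : I) (hi : i ∉ S) :
    (S.sort (· ≤ ·)).orderedInsert (· ≤ ·) i = (insert i S).sort (· ≤ ·) := by
  refine (fun hp h1 h2 => List.Perm.eq_of_pairwise' (r := (· ≤ ·)) h1 h2 hp) ?_ ?_ ?_
  · have h1 : (((S.sort (· ≤ ·)).orderedInsert (· ≤ ·) i : List I) : Multiset I)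
        = ↑(i :: S.sort (· ≤ ·)) :=
      Multiset.coe_eq_coe.mpr (List.perm_orderedInsert _ i _)
    rw [← Multiset.coe_eq_coe, h1, ← Multiset.cons_coe, Finset.sort_eq, Finset.sort_eq,
      Finset.insert_val_of_notMem hi]
  · exact List.Pairwise.orderedInsert i _ (Finset.pairwise_sort S _)
  · exact Finset.pairwise_sort _ _

include hacne in
lemma a_Ov_not_mem (S : Finset I) (i : I) (hi : i ∉ S) : d.a i (d.Ov S) = 0 :=
  a_vacL_not_mem d hacne _ i (by simpa [Finset.mem_sort] using hi)

include hacne haceq in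
lemma a_Ov_mem (S : Finset I) (i : I) (hi : i ∈ S) :
    d.a i (d.Ov S) = sgn S i • d.Ov (S.erase i) := by
  rw [Ov, a_vacL d hacne haceq _ (Finset.sort_nodup S _) i (by simpa [Finset.mem_sort] using hi),
    takeWhile_ne_eq_filter_lt _ ((Finset.sortedLT_sort S).pairwise) i
      (by simpa [Finset.mem_sort] using hi),
    length_filter_sort S (fun j => j < i), sort_erase]
  rfl

include hcc hcc' in
lemma c_Ov_mem (S : Finset I) (i : I) (hi : i ∈ S) : d.c i (d.Ov S) = 0 :=
  c_vacL_mem d hcc' hcc _ (Finset.sort_nodup S _) i (by simpa [Finset.mem_sort] using hi)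

include hcc' in
lemma c_Ov_not_mem (S : Finset I) (i : I) (hi : i ∉ S) :
    d.c i (d.Ov S) = sgn S i • d.Ov (insert i S) := by
  rw [Ov, c_vacL_not_mem d hcc' _ i (by simpa [Finset.mem_sort] using hi),
    takeWhile_nle_eq_filter_lt _ ((Finset.sortedLT_sort S).pairwise) i,
    length_filter_sort S (fun j => j < i), sort_oI S i hi]
  rfl


lemma sgn_sq (S : Finset I) (i : I) : sgn S i * sgn S i = 1 := by
  rw [sgn, ← mul_pow]; norm_num

lemma sgn_erase (S : Finset I) (i : I) : sgn (S.erase i) i = sgn S i := by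
  unfold sgn
  congr 2
  rw [Finset.filter_erase, Finset.erase_eq_of_notMem (by simp)]

lemma sgn_insert (S : Finset I) (i : I) : sgn (insert i S) i = sgn S i := by
  unfold sgn
  congr 2
  rw [Finset.filter_insert, if_neg (lt_irrefl i)]

include hacne haceq hcc hcc' in
lemma m3_Ov (S : Finset I) (i : I) :
    (d.c i * d.a i - d.a i * d.c i) (d.Ov S) = (if i ∈ S then (1:ℂ) else -1) • d.Ov S := by
  by_cases hi : i ∈ S
  · rw [sub_apply, mul_apply_eq_comp, mul_apply_eq_comp, a_Ov_mem d hacne haceq S i hi, map_smul,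
      c_Ov_not_mem d hcc' (S.erase i) i (Finset.notMem_erase i S),
      c_Ov_mem d hcc' hcc S i hi, map_zero, sgn_erase, Finset.insert_erase hi,
      smul_smul, sgn_sq, if_pos hi]
    simp
  · rw [sub_apply, mul_apply_eq_comp, mul_apply_eq_comp, a_Ov_not_mem d hacne S i hi, map_zero,
      c_Ov_not_mem d hcc' S i hi, map_smul,
      a_Ov_mem d hacne haceq (insert i S) i (Finset.mem_insert_self i S),
      sgn_insert, Finset.erase_insert hi, smul_smul, sgn_sq, if_neg hi]
    simp

lemma Ov_empty : d.Ov (∅ : Finset I) = d.Ω := by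
  simp [Ov, vacL]

lemma Ov_min (S : Finset I) (h : S.Nonempty) :
    d.Ov S = d.c (S.min' h) (d.Ov (S.erase (S.min' h))) := by
  rw [Ov, Ov, ← vacL_cons]
  congr 1
  conv_lhs => rw [← Finset.insert_erase (S.min'_mem h)]
  rw [Finset.sort_insert]
  · intro b hb
    exact S.min'_le b (Finset.mem_of_mem_erase hb)
  · exact Finset.notMem_erase _ _

include hacne haceq in
lemma orth (S : Finset I) : ∀ T : Finset I,
    (inner ℂ (d.Ov S) (d.Ov T) : ℂ) = if S = T then 1 else 0 := by
  induction S using Finset.strongInductionOn with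
  | _ S ih =>
    intro T
    rcases S.eq_empty_or_nonempty with rfl | hS
    · rcases T.eq_empty_or_nonempty with rfl | hT
      · rw [if_pos rfl, Ov_empty]
        rw [@inner_self_eq_norm_sq_to_K ℂ]
        rw [d.hΩn]
        norm_num
      · rw [if_neg (by rintro rfl; exact hT.ne_empty rfl), Ov_min d T hT, Ov_empty, c,
          adjoint_inner_right, d.hΩ, inner_zero_left]
    · set i := S.min' hS with hidef
      have hiS : i ∈ S := S.min'_mem hS
      have hsub : S.erase i ⊂ S := Finset.erase_ssubset hiS
      rw [Ov_min d S hS, c, adjoint_inner_left]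
      by_cases hiT : i ∈ T
      · rw [a_Ov_mem d hacne haceq T i hiT, inner_smul_right, ih _ hsub (T.erase i)]
        by_cases hST : S.erase i = T.erase i
        · have hSTeq : S = T := by
            rw [← Finset.insert_erase hiS, hST, Finset.insert_erase hiT]
          rw [if_pos hST, if_pos hSTeq, mul_one]
          have : Finset.filter (fun j => j < i) T = ∅ := by
            rw [Finset.filter_eq_empty_iff]
            intro x hx
            rcases eq_or_ne x i with h | hxi
            · simp [h]
            · have : x ∈ S.erase i := by rw [hST]; exact Finset.mem_erase.mpr ⟨hxi, hx⟩
              exact not_lt.mpr (S.min'_le x (Finset.mem_of_mem_erase this))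
          rw [sgn, this]
          norm_num
        · have : S ≠ T := by
            rintro rfl; exact hST rfl
          rw [if_neg hST, if_neg this, mul_zero]
      · rw [a_Ov_not_mem d hacne T i hiT, inner_zero_right,
          if_neg (by rintro rfl; exact hiT hiS)]


def w (k k' : Fin 4) (b : Bool) : ℂ :=
  if k = k' then
    (if k = 1 then (if b then 1 else 0)
     else if k = 2 then (if b then 0 else 1) else 1)
  else if (k = 0 ∧ k' = 3) ∨ (k = 3 ∧ k' = 0) then (if b then 1 else -1)
  else 0

lemma fin4cases : ∀ k : Fin 4, k = 0 ∨ k = 1 ∨ k = 2 ∨ k = 3 := by decide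

def prodL (f : I → Fin 4) (l : List I) : ℋ →L[ℂ] ℋ :=
  (l.map fun i => mFactor (d.a i) (f i)).prod

lemma prodL_nil (f : I → Fin 4) : d.prodL f [] = 1 := rfl

lemma prodL_append (f : I → Fin 4) (l : List I) (i : I) :
    d.prodL f (l ++ [i]) = d.prodL f l * mFactor (d.a i) (f i) := by
  simp [prodL]

lemma mF0 (i : I) : mFactor (d.a i) 0 = 1 := rfl
lemma mF1 (i : I) : mFactor (d.a i) 1 = d.a i := rfl
lemma mF2 (i : I) : mFactor (d.a i) 2 = d.c i := rfl
lemma mF3 (i : I) : mFactor (d.a i) 3 = d.c i * d.a i - d.a i * d.c i := by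
  show _ - _ = _
  rfl

lemma conj_sgn (S : Finset I) (i : I) : (starRingEnd ℂ) (sgn S i) = sgn S i := by
  simp [sgn, map_pow]

include hacne haceq hcc hcc' in
lemma mstep (S : Finset I) (i : I) (k : Fin 4) :
    ∃ (ε : ℂ) (S' : Finset I), (∀ j, j ≠ i → (j ∈ S' ↔ j ∈ S)) ∧
      mFactor (d.a i) k (d.Ov S) = ε • d.Ov S' := by
  rcases fin4cases k with rfl | rfl | rfl | rfl
  · exact ⟨1, S, fun j _ => Iff.rfl, by rw [mF0]; simp⟩
  · by_cases hi : i ∈ S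
    · exact ⟨sgn S i, S.erase i,
        fun j hj => by simp [Finset.mem_erase, hj],
        by rw [mF1]; exact a_Ov_mem d hacne haceq S i hi⟩
    · exact ⟨0, S, fun j _ => Iff.rfl,
        by rw [mF1, a_Ov_not_mem d hacne S i hi, zero_smul]⟩
  · by_cases hi : i ∈ S
    · exact ⟨0, S, fun j _ => Iff.rfl,
        by rw [mF2, c_Ov_mem d hcc' hcc S i hi, zero_smul]⟩
    · exact ⟨sgn S i, insert i S,
        fun j hj => by simp [Finset.mem_insert, hj],
        by rw [mF2]; exact c_Ov_not_mem d hcc' S i hi⟩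
  · exact ⟨if i ∈ S then 1 else -1, S, fun j _ => Iff.rfl,
      by rw [mF3]; exact m3_Ov d hcc' hcc hacne haceq S i⟩

include hacne haceq hcc hcc' in
lemma mainZ : ∀ (l : List I) (f g : I → Fin 4) (S T : Finset I) (x : I), x ∉ l →
    ((x ∈ S ∧ x ∉ T) ∨ (x ∉ S ∧ x ∈ T)) →
    (inner ℂ (d.prodL f l (d.Ov S)) (d.prodL g l (d.Ov T)) : ℂ) = 0 := by
  intro l
  induction l using List.reverseRecOn with
  | nil =>
    intro f g S T x _ hST
    have hne : S ≠ T := by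
      rcases hST with ⟨h1, h2⟩ | ⟨h1, h2⟩
      · exact fun h => h2 (h ▸ h1)
      · exact fun h => h1 (h ▸ h2)
    rw [prodL_nil d f, prodL_nil d g, one_apply_eq_self, one_apply_eq_self, orth d hacne haceq S T, if_neg hne]
  | append_singleton l i ih =>
    intro f g S T x hx hST
    have hxl : x ∉ l := fun h => hx (List.mem_append_left _ h)
    have hxi : x ≠ i := fun h => hx (List.mem_append_right _ (h ▸ List.mem_singleton_self x))
    rw [prodL_append, prodL_append, mul_apply_eq_comp, mul_apply_eq_comp]
    obtain ⟨ε, S', hS', hmS⟩ := mstep d hcc' hcc hacne haceq S i (f i)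
    obtain ⟨ε', T', hT', hmT⟩ := mstep d hcc' hcc hacne haceq T i (g i)
    rw [hmS, hmT, map_smul, map_smul, inner_smul_left, inner_smul_right,
      ih f g S' T' x hxl ?_, mul_zero, mul_zero]
    rcases hST with ⟨h1, h2⟩ | ⟨h1, h2⟩
    · exact Or.inl ⟨(hS' x hxi).mpr h1, fun h => h2 ((hT' x hxi).mp h)⟩
    · exact Or.inr ⟨fun h => h1 ((hS' x hxi).mp h), (hT' x hxi).mpr h2⟩


include hcc' hcc hacne haceq in
lemma main : ∀ (l : List I), l.Nodup → ∀ (f g : I → Fin 4) (S : Finset I),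
    (inner ℂ (d.prodL f l (d.Ov S)) (d.prodL g l (d.Ov S)) : ℂ)
      = (l.map fun i => w (f i) (g i) (decide (i ∈ S))).prod := by
  intro l
  induction l using List.reverseRecOn with
  | nil =>
    intro _ f g S
    rw [prodL_nil d f, prodL_nil d g, one_apply_eq_self, orth d hacne haceq S S, if_pos rfl]
    simp
  | append_singleton l i ih =>
    intro hnd f g S
    have hil : i ∉ l := fun h =>
      (List.nodup_append'.mp hnd).2.2 h (List.mem_singleton_self i)
    have hl : l.Nodup := (List.nodup_append.mp hnd).1
    have hmapE : (l.map fun j => w (f j) (g j) (decide (j ∈ S.erase i)))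
        = l.map fun j => w (f j) (g j) (decide (j ∈ S)) := by
      apply List.map_congr_left; intro j hj
      have hji : j ≠ i := fun h => hil (h ▸ hj)
      simp [Finset.mem_erase, hji]
    have hmapI : (l.map fun j => w (f j) (g j) (decide (j ∈ insert i S)))
        = l.map fun j => w (f j) (g j) (decide (j ∈ S)) := by
      apply List.map_congr_left; intro j hj
      have hji : j ≠ i := fun h => hil (h ▸ hj)
      simp [Finset.mem_insert, hji]
    rw [prodL_append, prodL_append, mul_apply_eq_comp, mul_apply_eq_comp,
      List.map_append, List.prod_append, List.map_singleton, List.prod_singleton]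
    rcases fin4cases (f i) with hf | hf | hf | hf <;> rcases fin4cases (g i) with hg | hg | hg | hg <;>
      rw [hf, hg]
    -- (0,0)
    · rw [mF0 d i, one_apply_eq_self, ih hl f g S]
      simp [w]
    -- (0,1)
    · rw [mF0 d i, mF1 d i, one_apply_eq_self]
      by_cases hiS : i ∈ S
      · rw [a_Ov_mem d hacne haceq S i hiS, map_smul, inner_smul_right,
          mainZ d hcc' hcc hacne haceq l f g S (S.erase i) i hil
            (Or.inl ⟨hiS, Finset.notMem_erase i S⟩), mul_zero]
        simp [w]
      · rw [a_Ov_not_mem d hacne S i hiS, map_zero, inner_zero_right]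
        simp [w]
    -- (0,2)
    · rw [mF0 d i, mF2 d i, one_apply_eq_self]
      by_cases hiS : i ∈ S
      · rw [c_Ov_mem d hcc' hcc S i hiS, map_zero, inner_zero_right]
        simp [w]
      · rw [c_Ov_not_mem d hcc' S i hiS, map_smul, inner_smul_right,
          mainZ d hcc' hcc hacne haceq l f g S (insert i S) i hil
            (Or.inr ⟨hiS, Finset.mem_insert_self i S⟩), mul_zero]
        simp [w]
    -- (0,3)
    · rw [mF0 d i, mF3 d i, one_apply_eq_self, m3_Ov d hcc' hcc hacne haceq S i, map_smul,
        inner_smul_right, ih hl f g S]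
      by_cases hiS : i ∈ S <;> simp [w, hiS, mul_comm]
    -- (1,0)
    · rw [mF1 d i, mF0 d i, one_apply_eq_self]
      by_cases hiS : i ∈ S
      · rw [a_Ov_mem d hacne haceq S i hiS, map_smul, inner_smul_left,
          mainZ d hcc' hcc hacne haceq l f g (S.erase i) S i hil
            (Or.inr ⟨Finset.notMem_erase i S, hiS⟩), mul_zero]
        simp [w]
      · rw [a_Ov_not_mem d hacne S i hiS, map_zero, inner_zero_left]
        simp [w]
    -- (1,1)
    · rw [mF1 d i]
      by_cases hiS : i ∈ S
      · rw [a_Ov_mem d hacne haceq S i hiS, map_smul, map_smul, inner_smul_left,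
          inner_smul_right, ih hl f g (S.erase i), hmapE, conj_sgn, ← mul_assoc, sgn_sq]
        simp [w, hiS]
      · rw [a_Ov_not_mem d hacne S i hiS, map_zero, inner_zero_left]
        simp [w, hiS]
    -- (1,2)
    · rw [mF1 d i, mF2 d i]
      by_cases hiS : i ∈ S
      · rw [c_Ov_mem d hcc' hcc S i hiS, map_zero, inner_zero_right]
        simp [w]
      · rw [a_Ov_not_mem d hacne S i hiS, map_zero, inner_zero_left]
        simp [w]
    -- (1,3)
    · rw [mF1 d i, mF3 d i, m3_Ov d hcc' hcc hacne haceq S i]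
      by_cases hiS : i ∈ S
      · rw [a_Ov_mem d hacne haceq S i hiS, map_smul, map_smul, inner_smul_left,
          inner_smul_right,
          mainZ d hcc' hcc hacne haceq l f g (S.erase i) S i hil
            (Or.inr ⟨Finset.notMem_erase i S, hiS⟩), mul_zero, mul_zero]
        simp [w]
      · rw [a_Ov_not_mem d hacne S i hiS, map_zero, inner_zero_left]
        simp [w]
    -- (2,0)
    · rw [mF2 d i, mF0 d i, one_apply_eq_self]
      by_cases hiS : i ∈ S
      · rw [c_Ov_mem d hcc' hcc S i hiS, map_zero, inner_zero_left]
        simp [w]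
      · rw [c_Ov_not_mem d hcc' S i hiS, map_smul, inner_smul_left,
          mainZ d hcc' hcc hacne haceq l f g (insert i S) S i hil
            (Or.inl ⟨Finset.mem_insert_self i S, hiS⟩), mul_zero]
        simp [w]
    -- (2,1)
    · rw [mF2 d i, mF1 d i]
      by_cases hiS : i ∈ S
      · rw [c_Ov_mem d hcc' hcc S i hiS, map_zero, inner_zero_left]
        simp [w]
      · rw [a_Ov_not_mem d hacne S i hiS, map_zero, inner_zero_right]
        simp [w]
    -- (2,2)
    · rw [mF2 d i]
      by_cases hiS : i ∈ S
      · rw [c_Ov_mem d hcc' hcc S i hiS, map_zero, inner_zero_left]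
        simp [w, hiS]
      · rw [c_Ov_not_mem d hcc' S i hiS, map_smul, map_smul, inner_smul_left,
          inner_smul_right, ih hl f g (insert i S), hmapI, conj_sgn, ← mul_assoc, sgn_sq]
        simp [w, hiS]
    -- (2,3)
    · rw [mF2 d i, mF3 d i, m3_Ov d hcc' hcc hacne haceq S i]
      by_cases hiS : i ∈ S
      · rw [c_Ov_mem d hcc' hcc S i hiS, map_zero, inner_zero_left]
        simp [w]
      · rw [c_Ov_not_mem d hcc' S i hiS, map_smul, map_smul, inner_smul_left,
          inner_smul_right,
          mainZ d hcc' hcc hacne haceq l f g (insert i S) S i hil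
            (Or.inl ⟨Finset.mem_insert_self i S, hiS⟩), mul_zero, mul_zero]
        simp [w]
    -- (3,0)
    · rw [mF3 d i, mF0 d i, one_apply_eq_self, m3_Ov d hcc' hcc hacne haceq S i, map_smul,
        inner_smul_left, ih hl f g S]
      by_cases hiS : i ∈ S <;> simp [w, hiS, mul_comm]
    -- (3,1)
    · rw [mF3 d i, mF1 d i, m3_Ov d hcc' hcc hacne haceq S i]
      by_cases hiS : i ∈ S
      · rw [a_Ov_mem d hacne haceq S i hiS, map_smul, map_smul, inner_smul_left,
          inner_smul_right,
          mainZ d hcc' hcc hacne haceq l f g S (S.erase i) i hil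
            (Or.inl ⟨hiS, Finset.notMem_erase i S⟩), mul_zero, mul_zero]
        simp [w]
      · rw [a_Ov_not_mem d hacne S i hiS, map_zero, inner_zero_right]
        simp [w]
    -- (3,2)
    · rw [mF3 d i, mF2 d i, m3_Ov d hcc' hcc hacne haceq S i]
      by_cases hiS : i ∈ S
      · rw [c_Ov_mem d hcc' hcc S i hiS, map_zero, inner_zero_right]
        simp [w]
      · rw [c_Ov_not_mem d hcc' S i hiS, map_smul, map_smul, inner_smul_left,
          inner_smul_right,
          mainZ d hcc' hcc hacne haceq l f g S (insert i S) i hil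
            (Or.inr ⟨hiS, Finset.mem_insert_self i S⟩), mul_zero, mul_zero]
        simp [w]
    -- (3,3)
    · rw [mF3 d i, m3_Ov d hcc' hcc hacne haceq S i, map_smul, map_smul, inner_smul_left,
        inner_smul_right, ih hl f g S]
      by_cases hiS : i ∈ S <;> simp [w, hiS]


lemma sum_prod_w [Fintype I] (f g : I → Fin 4) :
    (∑ S : Finset I, ∏ i, w (f i) (g i) (decide (i ∈ S)))
      = if f = g then (2:ℂ) ^ (Finset.univ.filter fun i => f i = 0 ∨ f i = 3).card else 0 := by
  have hsplit : ∀ S : Finset I, (∏ i, w (f i) (g i) (decide (i ∈ S)))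
      = (∏ i ∈ S, w (f i) (g i) true) * ∏ i ∈ Finset.univ \ S, w (f i) (g i) false := by
    intro S
    conv_lhs => rw [← Finset.union_sdiff_of_subset (Finset.subset_univ S)]
    rw [Finset.prod_union Finset.disjoint_sdiff]
    congr 1
    · exact Finset.prod_congr rfl fun i hi => by simp [hi]
    · exact Finset.prod_congr rfl fun i hi => by
        simp [(Finset.mem_sdiff.mp hi).2]
  rw [Finset.sum_congr rfl (fun S _ => hsplit S), ← Finset.powerset_univ, ← Finset.prod_add]
  by_cases hfg : f = g
  · subst hfg
    rw [if_pos rfl]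
    have hterm : ∀ i ∈ Finset.univ, w (f i) (f i) true + w (f i) (f i) false
        = if f i = 0 ∨ f i = 3 then (2:ℂ) else 1 := by
      intro i _
      rcases fin4cases (f i) with hf|hf|hf|hf <;> rw [hf] <;> (try simp [w]) <;> (try norm_num)
    rw [Finset.prod_congr rfl hterm, Finset.prod_ite, Finset.prod_const, Finset.prod_const,
      one_pow, mul_one]
  · rw [if_neg hfg]
    obtain ⟨i, hi⟩ : ∃ i, f i ≠ g i := by
      by_contra h; push_neg at h; exact hfg (funext h)
    apply Finset.prod_eq_zero (Finset.mem_univ i)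
    rcases fin4cases (f i) with hf|hf|hf|hf <;> rcases fin4cases (g i) with hg|hg|hg|hg <;>
      first
        | exact absurd (hf.trans hg.symm) hi
        | (rw [hf, hg]; (try simp [w]) <;> (try norm_num))
end Ordered
end CARSys

lemma trace_formula {ι : Type*} [Fintype ι] [DecidableEq ι] [Nonempty ι] (v : ι → ℋ)
    (hv : Orthonormal ℂ v) (hc : Fintype.card ι = Module.finrank ℂ ℋ) (T : ℋ →L[ℂ] ℋ) :
    LinearMap.trace ℂ ℋ T.toLinearMap = ∑ i, (inner ℂ (v i) (T (v i)) : ℂ) := by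
  set b : Module.Basis ι ℂ ℋ := basisOfOrthonormalOfCardEqFinrank hv hc with hbdef
  have hb : ⇑b = v := coe_basisOfOrthonormalOfCardEqFinrank hv hc
  have hob : Orthonormal ℂ ⇑b := hb ▸ hv
  rw [LinearMap.trace_eq_matrix_trace ℂ b, Matrix.trace]
  apply Finset.sum_congr rfl
  intro i _
  rw [Matrix.diag]
  rw [LinearMap.toMatrix_apply]
  have h1 : b.repr (T.toLinearMap (b i)) i
      = (b.toOrthonormalBasis hob).toBasis.repr (T.toLinearMap (b i)) i := by
    rw [Module.Basis.toBasis_toOrthonormalBasis]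
  rw [h1, OrthonormalBasis.coe_toBasis_repr_apply, OrthonormalBasis.repr_apply_apply,
    Module.Basis.coe_toOrthonormalBasis, hb]
  rfl
end Stmt13

open Stmt13 Stmt13.CARSys

/-- for a CAR family `(a_i)_{i∈I}` on a Hilbert space of dimension `2^|I|` with a
vacuum vector `Ω`, the `4^|I|` normalized monomials `M_f` form an orthonormal basis of `ℒ(ℋ)`
with the Hilbert–Schmidt inner product `⟨A,B⟩ = tr(A*B)`: they are orthonormal and they span. -/
theorem stmt13 {I : Type*} [Fintype I] [LinearOrder I] [DecidableEq I]
    (hdim : Module.finrank ℂ ℋ = 2 ^ Fintype.card I)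
    (a : I → ℋ →L[ℂ] ℋ)
    (car_mix : ∀ i j : I, a i * adjoint (a j) + adjoint (a j) * a i = if i = j then 1 else 0)
    (car_ann : ∀ i j : I, a i * a j + a j * a i = 0)
    (Ω : ℋ) (hΩn : ‖Ω‖ = 1) (hΩ : ∀ i : I, a i Ω = 0) :
    (∀ f g : I → Fin 4,
        LinearMap.trace ℂ ℋ (adjoint (monomial a f) * monomial a g).toLinearMap
          = if f = g then 1 else 0) ∧
    Submodule.span ℂ (Set.range fun f : I → Fin 4 => monomial a f)
      = (⊤ : Submodule ℂ (ℋ →L[ℂ] ℋ)) := by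
  classical
  set d : CARSys I ℋ := ⟨a, car_mix, car_ann, Ω, hΩn, hΩ⟩ with hd
  have hcc' := d.cc'
  have hcc := d.cc
  have hacne := d.ac_ne
  have haceq := d.ac_eq
  set L : List I := Finset.univ.sort (· ≤ ·) with hLdef
  have hL : L.Nodup := Finset.sort_nodup _ _
  have horth : Orthonormal ℂ (fun S : Finset I => d.Ov S) :=
    orthonormal_iff_ite.mpr fun S T => d.orth hacne haceq S T
  have hcard : Fintype.card (Finset I) = Module.finrank ℂ ℋ := by
    rw [Fintype.card_finset, hdim]
  have hlist : ∀ (F : I → ℂ), (L.map F).prod = ∏ i, F i := by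
    intro F
    have h1 : ((L.map F : List ℂ) : Multiset ℂ) = Multiset.map F Finset.univ.val := by
      rw [← Finset.sort_eq Finset.univ (· ≤ ·), ← hLdef]
      simp
    calc (L.map F).prod = ((L.map F : List ℂ) : Multiset ℂ).prod := by
          rw [Multiset.prod_coe]
      _ = (Multiset.map F Finset.univ.val).prod := by rw [h1]
      _ = ∏ i, F i := rfl
  have hmono : ∀ h : I → Fin 4, monomial a h
      = (((((2:ℝ) ^ (-(((Finset.univ.filter fun i => h i = 0 ∨ h i = 3).card : ℝ)) / 2)) : ℝ) : ℂ)
        • d.prodL h L) := by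
    intro h
    rw [monomial, ← algebraMap_smul ℂ ((2:ℝ) ^ (-(((Finset.univ.filter fun i =>
      h i = 0 ∨ h i = 3).card : ℝ)) / 2)), Complex.coe_algebraMap]
    rfl
  have key : ∀ f g : I → Fin 4,
      LinearMap.trace ℂ ℋ (adjoint (monomial a f) * monomial a g).toLinearMap
        = if f = g then 1 else 0 := by
    intro f g
    set cf := (Finset.univ.filter fun i => f i = 0 ∨ f i = 3).card with hcf
    set cg := (Finset.univ.filter fun i => g i = 0 ∨ g i = 3).card with hcg
    set nf : ℝ := (2:ℝ) ^ (-(cf:ℝ)/2) with hnf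
    set ng : ℝ := (2:ℝ) ^ (-(cg:ℝ)/2) with hng
    have hadj : adjoint (monomial a f) = ((nf : ℂ)) • adjoint (d.prodL f L) := by
      rw [hmono f, ← star_eq_adjoint, star_smul, star_eq_adjoint]
      congr 1
      exact Complex.conj_ofReal nf
    have hmul : adjoint (monomial a f) * monomial a g
        = ((nf * ng : ℝ) : ℂ) • (adjoint (d.prodL f L) * d.prodL g L) := by
      rw [hadj, hmono g, smul_mul_smul_comm, ← Complex.ofReal_mul]
    rw [hmul]
    have hcoe : (((((nf * ng : ℝ) : ℂ)) • (adjoint (d.prodL f L) * d.prodL g L)).toLinearMap)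
        = (((nf * ng : ℝ) : ℂ)) • (adjoint (d.prodL f L) * d.prodL g L).toLinearMap := rfl
    rw [hcoe, map_smul]
    rw [trace_formula (fun S : Finset I => d.Ov S) horth hcard]
    have hterm : ∀ S : Finset I,
        (inner ℂ (d.Ov S) ((adjoint (d.prodL f L) * d.prodL g L) (d.Ov S)) : ℂ)
          = (L.map fun i => w (f i) (g i) (decide (i ∈ S))).prod := by
      intro S
      rw [mul_apply_eq_comp, adjoint_inner_right]
      exact d.main hcc' hcc hacne haceq L hL f g S
    rw [Finset.sum_congr rfl fun S _ => hterm S]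
    have : (∑ S : Finset I, (L.map fun i => w (f i) (g i) (decide (i ∈ S))).prod)
        = ∑ S : Finset I, ∏ i, w (f i) (g i) (decide (i ∈ S)) :=
      Finset.sum_congr rfl fun S _ => hlist _
    rw [this, sum_prod_w f g]
    by_cases hfg : f = g
    · subst hfg
      rw [if_pos rfl, if_pos rfl, ← hcf]
      have h2 : nf * nf = ((2:ℝ) ^ cf)⁻¹ := by
        rw [hnf, ← Real.rpow_add (by norm_num), show -(cf:ℝ)/2 + -(cf:ℝ)/2 = -(cf:ℝ) by ring,
          Real.rpow_neg (by norm_num), Real.rpow_natCast]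
      rw [show ng = nf from rfl, h2]
      push_cast
      rw [smul_eq_mul, inv_mul_cancel₀]
      exact pow_ne_zero _ (by norm_num)
    · rw [if_neg hfg, if_neg hfg, smul_zero]
  refine ⟨key, ?_⟩
  have hli : LinearIndependent ℂ (fun f : I → Fin 4 => monomial a f) := by
    rw [Fintype.linearIndependent_iff]
    intro coef hsum g
    set Φ : (ℋ →L[ℂ] ℋ) →ₗ[ℂ] ℂ :=
      (LinearMap.trace ℂ ℋ).comp ((ContinuousLinearMap.coeLM ℂ).comp
        (LinearMap.mulLeft ℂ (adjoint (monomial a g)))) with hPhi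
    have hPhiApply : ∀ T, Φ T = LinearMap.trace ℂ ℋ ((adjoint (monomial a g) * T).toLinearMap) :=
      fun T => rfl
    have h0 : Φ (∑ f, coef f • monomial a f) = 0 := by rw [hsum]; simp
    rw [map_sum] at h0
    simp only [map_smul] at h0
    have h1 : ∀ f, Φ (monomial a f) = if g = f then 1 else 0 := fun f => by
      rw [hPhiApply, key g f]
    rw [Finset.sum_congr rfl (fun f _ => by rw [h1 f])] at h0
    simpa using h0
  have hfr : Fintype.card (I → Fin 4) = Module.finrank ℂ (ℋ →L[ℂ] ℋ) := by
    have e : (ℋ →ₗ[ℂ] ℋ) ≃ₗ[ℂ] (ℋ →L[ℂ] ℋ) := LinearMap.toContinuousLinearMap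
    rw [← e.finrank_eq, Module.finrank_linearMap, hdim, Fintype.card_fun]
    rw [Fintype.card_fin, ← mul_pow]
    norm_num
  exact hli.span_eq_top_of_card_eq_finrank hfr
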